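/- arXiv:1312.2200 — 5 statements merged into one kernel-verified Lean document; each statement's English description precedes it below -/
import Mathlib

section
/- For all m, n ∈ ℕ, the EPOSIC channel Φ_{m,n,0} (with h = 0, so r = m+n) maps the pure state f_0 f_0* (where f_0 is the 0-th standard basis vector of ℂ^{r+1}) to the pure state e_0 e_0* (e_0 the 0-th standard basis vector of ℂ^{m+1}); consequently S_min(Φ_{m,n,0}) = 0. -/
open scoped BigOperators Matrix
open Matrix

/-- Binomial coefficient `C(a, b)` with an integer lower argument (zero if `b < 0`),
as a real number. -/
noncomputable def Cb (a : ℕ) (b : ℤ) : ℝ :=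
  if 0 ≤ b then (a.choose b.toNat : ℝ) else 0

/-- The coefficient `β_{i,s,j}` of the EPOSIC channel `Φ_{m,n,h}`. -/
noncomputable def epsBeta (m n h : ℕ) (i s j : ℤ) : ℝ :=
  ((-1 : ℝ) ^ s * Cb h s * Cb (n - h) (j - s) * Cb (m - h) (i - j + s)) /
    Real.sqrt (Cb (m + n - 2 * h) i * Cb m (i - j + h) * Cb n j *
      ∑ k ∈ Finset.range (h + 1),
        (h.choose k : ℝ) ^ 2 / ((m.choose (h - k) : ℝ) * (n.choose k : ℝ)))

/-- The coefficient `ε_i^j = ε_i^j(m,n,h)` of the EPOSIC channel `Φ_{m,n,h}`. -/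
noncomputable def eps (m n h : ℕ) (i j : ℤ) : ℝ :=
  ∑ s ∈ Finset.Icc (max 0 (max (j - i) (j + h - n)))
      (min (h : ℤ) (min j (j + m - i - h))),
    epsBeta m n h i s j

/-- The `j`-th EPOSIC Kraus operator of `Φ_{m,n,h}`: the `(m+1) × (r+1)` matrix
(`r = m + n - 2h`) whose `(i - j + h, i)` entry is `ε_i^j` for
`max{0, j-h} ≤ i ≤ min{r, m-h+j}`, all other entries being `0`. -/
noncomputable def kraus (m n h j : ℕ) : Matrix (Fin (m + 1)) (Fin (m + n - 2 * h + 1)) ℂ :=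
  Matrix.of fun l i =>
    if (l : ℤ) = (i : ℤ) - j + h ∧ max 0 ((j : ℤ) - h) ≤ (i : ℤ) ∧
        (i : ℤ) ≤ min ((m : ℤ) + n - 2 * h) ((m : ℤ) - h + j)
      then ((eps m n h i j : ℝ) : ℂ) else 0

/-- The EPOSIC channel `Φ_{m,n,h}`. -/
noncomputable def eposic (m n h : ℕ)
    (A : Matrix (Fin (m + n - 2 * h + 1)) (Fin (m + n - 2 * h + 1)) ℂ) :
    Matrix (Fin (m + 1)) (Fin (m + 1)) ℂ :=
  ∑ j ∈ Finset.range (n + 1), kraus m n h j * A * (kraus m n h j)ᴴ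

/-- The pure state `w w*` associated to a vector `w`. -/
noncomputable def pureState {d : ℕ} (w : EuclideanSpace ℂ (Fin d)) :
    Matrix (Fin d) (Fin d) ℂ :=
  Matrix.of fun i j => w i * (starRingEnd ℂ) (w j)

open scoped Classical in
/-- The von Neumann entropy (base-2) of a matrix: `-∑ λᵢ log₂ λᵢ` over its eigenvalues
if it is Hermitian, and `0` otherwise.  (Note `Real.logb 2 0 = 0`, giving the
convention `0 · log₂ 0 = 0`.) -/
noncomputable def entropy {d : ℕ} (ρ : Matrix (Fin d) (Fin d) ℂ) : ℝ :=
  if h : ρ.IsHermitian then -∑ i, h.eigenvalues i * Real.logb 2 (h.eigenvalues i) else 0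

/-- The minimal output entropy of a channel: the infimum of the entropies of the outputs
of pure-state inputs. -/
noncomputable def Smin {d e : ℕ}
    (Φ : Matrix (Fin d) (Fin d) ℂ → Matrix (Fin e) (Fin e) ℂ) : ℝ :=
  sInf {x | ∃ w : EuclideanSpace ℂ (Fin d), ‖w‖ = 1 ∧ x = entropy (Φ (pureState w))}

lemma Cb_eq (a : ℕ) (b : ℤ) (hb : 0 ≤ b) : Cb a b = (a.choose b.toNat : ℝ) := if_pos hb

lemma eps_zero_eq (m n : ℕ) (i j : ℤ) (hj0 : 0 ≤ j) (hjn : j ≤ n) (hji : j ≤ i)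
    (him : i ≤ m + j) :
    eps m n 0 i j = ((n.choose j.toNat : ℝ) * (m.choose (i - j).toNat : ℝ)) /
      Real.sqrt (((m + n).choose i.toNat : ℝ) * (m.choose (i - j).toNat : ℝ) *
        (n.choose j.toNat : ℝ)) := by
  have h1 : max 0 (max (j - i) (j + ((0:ℕ):ℤ) - n)) = 0 := by push_cast; omega
  have h2 : min (((0:ℕ):ℤ)) (min j (j + m - i - ((0:ℕ):ℤ))) = 0 := by push_cast; omega
  rw [eps, h1, h2, Finset.Icc_self, Finset.sum_singleton, epsBeta]
  have e1 : Cb 0 0 = 1 := by simp [Cb]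
  have e2 : Cb (n - 0) (j - 0) = (n.choose j.toNat : ℝ) := by
    rw [Nat.sub_zero, sub_zero, Cb_eq _ _ hj0]
  have e3 : Cb (m - 0) (i - j + 0) = (m.choose (i - j).toNat : ℝ) := by
    rw [Nat.sub_zero, add_zero, Cb_eq _ _ (by omega)]
  have e4 : Cb (m + n - 2 * 0) i = (((m + n).choose i.toNat : ℝ)) := by
    rw [Nat.mul_zero, Nat.sub_zero, Cb_eq _ _ (by omega)]
  have e5 : Cb m (i - j + ((0:ℕ):ℤ)) = (m.choose (i - j).toNat : ℝ) := by
    push_cast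
    rw [add_zero, Cb_eq _ _ (by omega)]
  have e6 : Cb n j = (n.choose j.toNat : ℝ) := Cb_eq _ _ hj0
  have e7 : ∑ k ∈ Finset.range (0 + 1),
      ((0:ℕ).choose k : ℝ) ^ 2 / ((m.choose (0 - k) : ℝ) * (n.choose k : ℝ)) = 1 := by
    simp
  rw [e2, e3, e4, e5, e6, e7]
  have e8 : Cb (0:ℕ) (0:ℤ) = 1 := by simp [Cb]
  norm_num [e8]

lemma eps_zero_nonneg (m n : ℕ) (i j : ℤ) (hj0 : 0 ≤ j) (hjn : j ≤ n) (hji : j ≤ i)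
    (him : i ≤ m + j) : 0 ≤ eps m n 0 i j := by
  rw [eps_zero_eq m n i j hj0 hjn hji him]
  positivity

lemma eps_zero_sq (m n : ℕ) (i j : ℤ) (hj0 : 0 ≤ j) (hjn : j ≤ n) (hji : j ≤ i)
    (him : i ≤ m + j) :
    (eps m n 0 i j) ^ 2 = ((n.choose j.toNat : ℝ) * (m.choose (i - j).toNat : ℝ)) /
      ((m + n).choose i.toNat : ℝ) := by
  rw [eps_zero_eq m n i j hj0 hjn hji him]
  have ha : (0:ℝ) < (n.choose j.toNat : ℝ) := by
    exact_mod_cast Nat.choose_pos (by omega)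
  have hb : (0:ℝ) < (m.choose (i - j).toNat : ℝ) := by
    exact_mod_cast Nat.choose_pos (by omega)
  have hc : (0:ℝ) < ((m + n).choose i.toNat : ℝ) := by
    exact_mod_cast Nat.choose_pos (by omega)
  rw [div_pow, Real.sq_sqrt (by positivity)]
  field_simp

lemma eps_zero_zero (m n : ℕ) : eps m n 0 0 0 = 1 := by
  rw [eps_zero_eq m n 0 0 le_rfl (by positivity) le_rfl (by positivity)]
  simp

lemma vander_nat (m n i : ℕ) :
    ∑ j ∈ Finset.range (n + 1), (if j ≤ i then n.choose j * m.choose (i - j) else 0)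
      = (n + m).choose i := by
  rw [Nat.add_choose_eq, Finset.Nat.sum_antidiagonal_eq_sum_range_succ_mk]
  have l1 : ∑ j ∈ Finset.range (n + 1), (if j ≤ i then n.choose j * m.choose (i - j) else 0)
      = ∑ j ∈ Finset.range (n + i + 2), (if j ≤ i then n.choose j * m.choose (i - j) else 0) := by
    apply Finset.sum_subset (Finset.range_subset_range.mpr (by omega))
    intro x hx hx'
    have hn : n < x := by
      simp only [Finset.mem_range] at hx'
      omega
    simp [Nat.choose_eq_zero_of_lt hn]
  have hfil : (Finset.range (n + i + 2)).filter (fun j => j ≤ i) = Finset.range (i + 1) := by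
    ext x
    simp only [Finset.mem_filter, Finset.mem_range]
    omega
  rw [l1, ← Finset.sum_filter, hfil]

lemma kraus_zero_apply (m n j : ℕ) (l : Fin (m + 1)) (i : Fin (m + n - 2 * 0 + 1)) :
    kraus m n 0 j l i =
      if ((l : ℤ) = (i : ℤ) - j ∧ (j : ℤ) ≤ (i : ℤ) ∧ (i : ℤ) ≤ (m : ℤ) + j)
        then ((eps m n 0 (i : ℤ) j : ℝ) : ℂ) else 0 := by
  have hi : (i : ℕ) < m + n - 2 * 0 + 1 := i.isLt
  rw [kraus, Matrix.of_apply]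
  split_ifs with h1 h2 h2
  · rfl
  · exfalso; push_cast at h1 h2; omega
  · exfalso; push_cast at h1 h2; omega
  · rfl

lemma kraus_identity (m n : ℕ) :
    ∑ j ∈ Finset.range (n + 1), (kraus m n 0 j)ᴴ * kraus m n 0 j = 1 := by
  ext i i'
  simp only [Matrix.sum_apply, Matrix.mul_apply, Matrix.conjTranspose_apply, kraus_zero_apply,
    Matrix.one_apply]
  by_cases hii : i = i'
  · subst hii
    rw [if_pos rfl]
    have hm : (i : ℕ) < m + n - 2 * 0 + 1 := i.isLt
    have inner : ∀ j ∈ Finset.range (n + 1),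
        (∑ l : Fin (m + 1),
          star (if ((l : ℤ) = (i : ℤ) - j ∧ (j : ℤ) ≤ (i : ℤ) ∧ (i : ℤ) ≤ (m : ℤ) + j)
            then ((eps m n 0 (i : ℤ) j : ℝ) : ℂ) else 0) *
          (if ((l : ℤ) = (i : ℤ) - j ∧ (j : ℤ) ≤ (i : ℤ) ∧ (i : ℤ) ≤ (m : ℤ) + j)
            then ((eps m n 0 (i : ℤ) j : ℝ) : ℂ) else 0))
        = if ((j : ℤ) ≤ (i : ℤ) ∧ (i : ℤ) ≤ (m : ℤ) + j)
            then (((eps m n 0 (i : ℤ) j) ^ 2 : ℝ) : ℂ) else 0 := by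
      intro j hj
      by_cases hQ : ((j : ℤ) ≤ (i : ℤ) ∧ (i : ℤ) ≤ (m : ℤ) + j)
      · rw [if_pos hQ]
        rw [Finset.sum_eq_single (⟨(i : ℕ) - j, by omega⟩ : Fin (m + 1))]
        · rw [if_pos ⟨by push_cast; omega, hQ⟩]
          rw [Complex.star_def, Complex.conj_ofReal, ← Complex.ofReal_mul, sq]
        · intro l _ hl
          rw [if_neg, mul_zero]
          rintro ⟨h1, -⟩
          apply hl
          apply Fin.ext
          show (l : ℕ) = (i : ℕ) - j
          omega
        · intro h
          exact absurd (Finset.mem_univ _) h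
      · rw [if_neg hQ]
        apply Finset.sum_eq_zero
        intro l _
        rw [if_neg (fun h => hQ h.2), mul_zero]
    rw [Finset.sum_congr rfl inner]
    have hre : ∀ j ∈ Finset.range (n + 1),
        (if ((j : ℤ) ≤ (i : ℤ) ∧ (i : ℤ) ≤ (m : ℤ) + j)
            then (((eps m n 0 (i : ℤ) j) ^ 2 : ℝ) : ℂ) else 0)
        = (((if j ≤ (i : ℕ) then ((n.choose j * m.choose ((i : ℕ) - j) : ℕ) : ℝ) else 0)
            / ((m + n).choose (i : ℕ) : ℝ) : ℝ) : ℂ) := by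
      intro j hj
      simp only [Finset.mem_range] at hj
      by_cases hQ : ((j : ℤ) ≤ (i : ℤ) ∧ (i : ℤ) ≤ (m : ℤ) + j)
      · rw [if_pos hQ, if_pos (by omega)]
        rw [eps_zero_sq m n (i : ℤ) j (by positivity) (by exact_mod_cast Nat.cast_le.mpr (by omega)) hQ.1 hQ.2]
        have t1 : ((j : ℤ)).toNat = j := Int.toNat_natCast j
        have t2 : (((i : ℤ)) - (j : ℤ)).toNat = (i : ℕ) - j := by omega
        have t3 : (((i : Fin (m + n - 2 * 0 + 1)) : ℤ)).toNat = (i : ℕ) := by omega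
        rw [t1, t2, t3]
        push_cast
        ring
      · rw [if_neg hQ]
        by_cases hji : j ≤ (i : ℕ)
        · rw [if_pos hji]
          have : m.choose ((i : ℕ) - j) = 0 := Nat.choose_eq_zero_of_lt (by omega)
          rw [this]
          norm_num
        · rw [if_neg hji]
          norm_num
    rw [Finset.sum_congr rfl hre, ← Complex.ofReal_sum, ← Finset.sum_div]
    have : ∑ j ∈ Finset.range (n + 1),
        (if j ≤ (i : ℕ) then ((n.choose j * m.choose ((i : ℕ) - j) : ℕ) : ℝ) else 0)
        = (((n + m).choose (i : ℕ) : ℕ) : ℝ) := by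
      rw [← vander_nat m n (i : ℕ)]
      push_cast
      rfl
    rw [this]
    rw [show n + m = m + n from Nat.add_comm n m]
    rw [div_self, Complex.ofReal_one]
    exact_mod_cast Nat.choose_pos (by omega : (i : ℕ) ≤ m + n) |>.ne'
  · rw [if_neg hii]
    apply Finset.sum_eq_zero
    intro j hj
    apply Finset.sum_eq_zero
    intro l _
    by_cases h1 : ((l : ℤ) = (i : ℤ) - j ∧ (j : ℤ) ≤ (i : ℤ) ∧ (i : ℤ) ≤ (m : ℤ) + j)
    · have hne : ¬((l : ℤ) = (i' : ℤ) - j ∧ (j : ℤ) ≤ (i' : ℤ) ∧ (i' : ℤ) ≤ (m : ℤ) + j) := by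
        rintro ⟨h2, -⟩
        exact hii (Fin.ext (by omega))
      rw [if_neg hne, mul_zero]
    · rw [if_neg h1, star_zero, zero_mul]


lemma kraus_col0 (m n j : ℕ) (l : Fin (m + 1)) :
    kraus m n 0 j l (0 : Fin (m + n - 2 * 0 + 1)) = if j = 0 ∧ l = 0 then 1 else 0 := by
  have h0 : (((0 : Fin (m + n - 2 * 0 + 1)) : ℕ) : ℤ) = 0 := by norm_num
  rw [kraus_zero_apply, h0]
  by_cases hc : ((l : ℤ) = 0 - (j : ℤ) ∧ (j : ℤ) ≤ 0 ∧ (0 : ℤ) ≤ (m : ℤ) + j)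
  · rw [if_pos hc]
    have hj0 : j = 0 := by omega
    have hl0 : l = 0 := by
      apply Fin.ext
      have : (l : ℕ) = 0 := by omega
      simp [this]
    rw [if_pos ⟨hj0, hl0⟩, hj0]
    norm_num [eps_zero_zero]
  · rw [if_neg hc, if_neg]
    rintro ⟨hj0, hl0⟩
    apply hc
    subst hj0
    subst hl0
    norm_num

lemma part1 (m n : ℕ) :
    eposic m n 0 (pureState (EuclideanSpace.single 0 1)) =
      pureState (EuclideanSpace.single (0 : Fin (m + 1)) 1) := by
  ext l l'
  rw [eposic]
  simp only [Matrix.sum_apply, Matrix.mul_apply, Matrix.conjTranspose_apply, pureState,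
    Matrix.of_apply, EuclideanSpace.single_apply, apply_ite (starRingEnd ℂ), _root_.map_one, _root_.map_zero, mul_ite, mul_one,
    mul_zero, ite_mul, zero_mul, one_mul, Finset.sum_ite_eq', Finset.mem_univ, if_true,
    kraus_col0, Finset.sum_ite_irrel, Finset.sum_const_zero]
  rw [Finset.sum_eq_single 0]
  · by_cases hl : l = 0 <;> by_cases hl' : l' = 0 <;> simp [hl, hl']
  · intro b _ hb
    simp [hb]
  · intro h
    simp at h


open scoped ComplexOrder

lemma pureState_posSemidef {d : ℕ} (w : EuclideanSpace ℂ (Fin d)) : (pureState w).PosSemidef := by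
  have h : pureState w =
      (Matrix.of fun i (_ : Fin 1) => w i) * (Matrix.of fun i (_ : Fin 1) => w i)ᴴ := by
    ext i j
    simp [pureState, Matrix.mul_apply, Matrix.conjTranspose_apply]
  rw [h]
  exact Matrix.posSemidef_self_mul_conjTranspose _

lemma pureState_trace {d : ℕ} (w : EuclideanSpace ℂ (Fin d)) (hw : ‖w‖ = 1) :
    (pureState w).trace = 1 := by
  have hsum : ∑ i, ‖w i‖ ^ 2 = 1 := by
    have h := EuclideanSpace.norm_eq w
    rw [hw] at h
    have := Real.sqrt_eq_one.mp h.symm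
    linarith [this]
  have hterm : ∀ i, w i * (starRingEnd ℂ) (w i) = ((‖w i‖ ^ 2 : ℝ) : ℂ) := by
    intro i
    rw [Complex.mul_conj, ← Complex.sq_norm]
  rw [Matrix.trace]
  calc ∑ i, (pureState w).diag i = ∑ i, ((‖w i‖ ^ 2 : ℝ) : ℂ) := by
        apply Finset.sum_congr rfl
        intro i _
        exact hterm i
    _ = ((∑ i, ‖w i‖ ^ 2 : ℝ) : ℂ) := by push_cast; rfl
    _ = 1 := by rw [hsum]; norm_num

lemma eposic_posSemidef (m n : ℕ) (w : EuclideanSpace ℂ (Fin (m + n - 2 * 0 + 1))) :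
    (eposic m n 0 (pureState w)).PosSemidef := by
  rw [eposic]
  apply Finset.sum_induction (fun j => kraus m n 0 j * pureState w * (kraus m n 0 j)ᴴ)
    (fun M => M.PosSemidef) (fun a b ha hb => ha.add hb) Matrix.PosSemidef.zero
  intro j _
  exact (pureState_posSemidef w).mul_mul_conjTranspose_same (kraus m n 0 j)

lemma trace_eposic (m n : ℕ) (w : EuclideanSpace ℂ (Fin (m + n - 2 * 0 + 1)))
    (hw : ‖w‖ = 1) : (eposic m n 0 (pureState w)).trace = 1 := by
  rw [eposic, Matrix.trace_sum]
  have h1 : ∀ j ∈ Finset.range (n + 1),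
      (kraus m n 0 j * pureState w * (kraus m n 0 j)ᴴ).trace
        = ((kraus m n 0 j)ᴴ * kraus m n 0 j * pureState w).trace := by
    intro j _
    rw [Matrix.trace_mul_cycle]
  rw [Finset.sum_congr rfl h1, ← Matrix.trace_sum, ← Finset.sum_mul, kraus_identity, one_mul,
    pureState_trace w hw]

lemma trace_eq_sum_eigenvalues {d : ℕ} {A : Matrix (Fin d) (Fin d) ℂ} (hA : A.IsHermitian) :
    A.trace = ∑ i, (hA.eigenvalues i : ℂ) := by
  exact hA.trace_eq_sum_eigenvalues

lemma eigen01 {d : ℕ} {A : Matrix (Fin d) (Fin d) ℂ} (hA : A.IsHermitian) (h2 : A * A = A)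
    (i : Fin d) : hA.eigenvalues i = 0 ∨ hA.eigenvalues i = 1 := by
  have hv := hA.mulVec_eigenvectorBasis i
  have h2v : A *ᵥ (A *ᵥ ⇑(hA.eigenvectorBasis i))
      = (hA.eigenvalues i * hA.eigenvalues i) • ⇑(hA.eigenvectorBasis i) := by
    rw [hv, Matrix.mulVec_smul, hv, smul_smul]
  rw [Matrix.mulVec_mulVec, h2, hv] at h2v
  have hvne : ⇑(hA.eigenvectorBasis i) ≠ 0 := by
    have hne := hA.eigenvectorBasis.orthonormal.ne_zero i
    intro hc
    apply hne
    ext j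
    exact congrFun hc j
  have hz : (hA.eigenvalues i * hA.eigenvalues i - hA.eigenvalues i)
      • ⇑(hA.eigenvectorBasis i) = 0 := by
    rw [sub_smul, h2v, sub_self]
  rcases smul_eq_zero.mp hz with h | h
  · have h' : hA.eigenvalues i * hA.eigenvalues i = hA.eigenvalues i := by
      linarith [sub_eq_zero.mp h]
    rcases mul_eq_zero.mp
        (show hA.eigenvalues i * (hA.eigenvalues i - 1) = 0 by nlinarith) with h | h
    · exact Or.inl h
    · exact Or.inr (by linarith)
  · exact absurd h hvne

lemma entropy_nonneg_of {d : ℕ} {ρ : Matrix (Fin d) (Fin d) ℂ} (hρ : ρ.PosSemidef)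
    (htr : ρ.trace = 1) : 0 ≤ entropy ρ := by
  rw [entropy, dif_pos hρ.1]
  have hsum : ∑ i, hρ.1.eigenvalues i = 1 := by
    have h := trace_eq_sum_eigenvalues hρ.1
    rw [htr] at h
    have h' : ((∑ i, hρ.1.eigenvalues i : ℝ) : ℂ) = ((1 : ℝ) : ℂ) := by
      push_cast
      rw [← h]
    exact_mod_cast h'
  rw [neg_nonneg]
  apply Finset.sum_nonpos
  intro i _
  have h0 : 0 ≤ hρ.1.eigenvalues i := hρ.eigenvalues_nonneg i
  have h1 : hρ.1.eigenvalues i ≤ 1 := by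
    rw [← hsum]
    exact Finset.single_le_sum (fun j _ => hρ.eigenvalues_nonneg j) (Finset.mem_univ i)
  exact mul_nonpos_iff.mpr (Or.inl ⟨h0, Real.logb_nonpos one_lt_two h0 h1⟩)

lemma entropy_proj {d : ℕ} {ρ : Matrix (Fin d) (Fin d) ℂ} (hρ : ρ.IsHermitian)
    (h2 : ρ * ρ = ρ) : entropy ρ = 0 := by
  rw [entropy, dif_pos hρ, neg_eq_zero]
  apply Finset.sum_eq_zero
  intro i _
  rcases eigen01 hρ h2 i with h | h <;> simp [h]

lemma pureState_single_idem (m : ℕ) :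
    pureState (EuclideanSpace.single (0 : Fin (m + 1)) (1 : ℂ)) *
      pureState (EuclideanSpace.single (0 : Fin (m + 1)) 1)
    = pureState (EuclideanSpace.single (0 : Fin (m + 1)) 1) := by
  ext i j
  simp only [pureState, Matrix.mul_apply, Matrix.of_apply, EuclideanSpace.single_apply,
    apply_ite (starRingEnd ℂ), _root_.map_one, _root_.map_zero, mul_ite, mul_one, mul_zero,
    ite_mul, zero_mul, one_mul, Finset.sum_ite_irrel, Finset.sum_const_zero,
    Finset.sum_ite_eq', Finset.mem_univ, if_true]

theorem stmt2 (m n : ℕ) :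
    eposic m n 0 (pureState (EuclideanSpace.single 0 1)) =
      pureState (EuclideanSpace.single (0 : Fin (m + 1)) 1) ∧
    Smin (eposic m n 0) = 0 := by
  refine ⟨part1 m n, ?_⟩
  rw [Smin]
  set S := {x | ∃ w : EuclideanSpace ℂ (Fin (m + n - 2 * 0 + 1)), ‖w‖ = 1 ∧
      x = entropy (eposic m n 0 (pureState w))} with hS
  have hmem : (0 : ℝ) ∈ S := by
    refine ⟨EuclideanSpace.single 0 1, by simp, ?_⟩
    rw [part1]
    exact (entropy_proj (pureState_posSemidef _).1 (pureState_single_idem m)).symm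
  have hlb : ∀ x ∈ S, (0 : ℝ) ≤ x := by
    rintro x ⟨w, hw, rfl⟩
    exact entropy_nonneg_of (eposic_posSemidef m n w) (trace_eposic m n w hw)
  exact le_antisymm (csInf_le ⟨0, hlb⟩ hmem) (le_csInf ⟨0, hmem⟩ hlb)
end

section
/- Let m, n, h ∈ ℕ with h ≤ min(m,n) and r = m+n−2h, and let ε_i^j = ε_i^j(m,n,h) be the EPOSIC coefficients. Then: (1) ε_i^0 ≠ 0 for all 0 ≤ i ≤ m−h; (2) ε_i^{i−m+h} ≠ 0 for all m−h ≤ i ≤ r; (3) ε_i^{i+h} ≠ 0 for all 0 ≤ i ≤ n−h; (4) ε_i^n ≠ 0 for all n−h ≤ i ≤ r. -/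
open scoped BigOperators Matrix
open Matrix

lemma Cb_pos (a : ℕ) {b : ℤ} (h0 : 0 ≤ b) (h1 : b ≤ (a : ℤ)) : 0 < Cb a b := by
  rw [Cb, if_pos h0]
  exact_mod_cast Nat.choose_pos (by omega : b.toNat ≤ a)

lemma sumpos (m n h : ℕ) (hm : h ≤ m) (hn : h ≤ n) :
    0 < ∑ k ∈ Finset.range (h + 1),
        (h.choose k : ℝ) ^ 2 / ((m.choose (h - k) : ℝ) * (n.choose k : ℝ)) := by
  apply Finset.sum_pos
  · intro k hk
    rw [Finset.mem_range] at hk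
    have hk' : k ≤ h := by omega
    have h1 : 0 < (h.choose k : ℝ) := by exact_mod_cast Nat.choose_pos hk'
    have h2 : 0 < (m.choose (h - k) : ℝ) := by
      exact_mod_cast Nat.choose_pos (by omega)
    have h3 : 0 < (n.choose k : ℝ) := by
      exact_mod_cast Nat.choose_pos (by omega)
    positivity
  · exact ⟨0, Finset.mem_range.2 (Nat.succ_pos h)⟩

lemma beta_ne (m n h : ℕ) (hm : h ≤ m) (hn : h ≤ n) (i s j : ℤ)
    (hs0 : 0 ≤ s) (hsh : s ≤ (h : ℤ))
    (hjs0 : 0 ≤ j - s) (hjs : j - s ≤ (n : ℤ) - h)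
    (hijs0 : 0 ≤ i - j + s) (hijs : i - j + s ≤ (m : ℤ) - h)
    (hi0 : 0 ≤ i) (hir : i ≤ (m : ℤ) + n - 2 * h) :
    epsBeta m n h i s j ≠ 0 := by
  have c1 := Cb_pos h hs0 hsh
  have c2 : 0 < Cb (n - h) (j - s) :=
    Cb_pos _ hjs0 (by push_cast [Nat.cast_sub hn] at hjs ⊢; omega)
  have c3 : 0 < Cb (m - h) (i - j + s) :=
    Cb_pos _ hijs0 (by push_cast [Nat.cast_sub hm] at hijs ⊢; omega)
  have d1 : 0 < Cb (m + n - 2 * h) i :=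
    Cb_pos _ hi0 (by push_cast [Nat.cast_sub (by omega : 2 * h ≤ m + n)] at hir ⊢; omega)
  have d2 : 0 < Cb m (i - j + h) := Cb_pos _ (by omega) (by omega)
  have d3 : 0 < Cb n j := Cb_pos _ (by omega) (by omega)
  have d4 := sumpos m n h hm hn
  have hne : ((-1 : ℝ) ^ s) ≠ 0 := zpow_ne_zero s (by norm_num)
  rw [epsBeta]
  apply div_ne_zero
  · exact mul_ne_zero (mul_ne_zero (mul_ne_zero hne c1.ne') c2.ne') c3.ne'
  · exact (Real.sqrt_pos.mpr (by positivity)).ne'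

theorem stmt3 (m n h : ℕ) (hh : h ≤ min m n) :
    (∀ i : ℤ, 0 ≤ i → i ≤ (m : ℤ) - h → eps m n h i 0 ≠ 0) ∧
    (∀ i : ℤ, (m : ℤ) - h ≤ i → i ≤ (m : ℤ) + n - 2 * h →
      eps m n h i (i - m + h) ≠ 0) ∧
    (∀ i : ℤ, 0 ≤ i → i ≤ (n : ℤ) - h → eps m n h i (i + h) ≠ 0) ∧
    (∀ i : ℤ, (n : ℤ) - h ≤ i → i ≤ (m : ℤ) + n - 2 * h → eps m n h i n ≠ 0) := by
  have hm : h ≤ m := le_trans hh (min_le_left _ _)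
  have hn : h ≤ n := le_trans hh (min_le_right _ _)
  have hmz : (h : ℤ) ≤ m := by exact_mod_cast hm
  have hnz : (h : ℤ) ≤ n := by exact_mod_cast hn
  refine ⟨?_, ?_, ?_, ?_⟩
  · intro i h0 h1
    rw [eps]
    have e1 : max 0 (max ((0:ℤ) - i) (0 + h - n)) = 0 := by omega
    have e2 : min (h : ℤ) (min 0 (0 + m - i - h)) = 0 := by omega
    rw [e1, e2, Finset.Icc_self, Finset.sum_singleton]
    exact beta_ne m n h hm hn i 0 0 le_rfl (by omega) (by omega) (by omega)
      (by omega) (by omega) h0 (by omega)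
  · intro i h0 h1
    rw [eps]
    have e1 : max 0 (max ((i - m + h) - i) ((i - m + h) + h - n)) = 0 := by omega
    have e2 : min (h : ℤ) (min (i - m + h) ((i - m + h) + m - i - h)) = 0 := by omega
    rw [e1, e2, Finset.Icc_self, Finset.sum_singleton]
    exact beta_ne m n h hm hn i 0 (i - m + h) le_rfl (by omega) (by omega) (by omega)
      (by omega) (by omega) (by omega) h1
  · intro i h0 h1
    rw [eps]
    have e1 : max 0 (max ((i + h) - i) ((i + h) + h - n)) = h := by omega
    have e2 : min (h : ℤ) (min (i + h) ((i + h) + m - i - h)) = h := by omega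
    rw [e1, e2, Finset.Icc_self, Finset.sum_singleton]
    exact beta_ne m n h hm hn i h (i + h) (by omega) le_rfl (by omega) (by omega)
      (by omega) (by omega) h0 (by omega)
  · intro i h0 h1
    rw [eps]
    have e1 : max 0 (max ((n : ℤ) - i) ((n : ℤ) + h - n)) = h := by omega
    have e2 : min (h : ℤ) (min (n : ℤ) ((n : ℤ) + m - i - h)) = h := by omega
    rw [e1, e2, Finset.Icc_self, Finset.sum_singleton]
    exact beta_ne m n h hm hn i h n (by omega) le_rfl (by omega) (by omega)
      (by omega) (by omega) (by omega) h1
end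

section
/- Let m ∈ ℕ with m ≥ 5 and let p ∈ [0,1]. For 0 ≤ j ≤ m set λ_j = 2(m−j+1)p/((m+1)(m+2)) + 2j(1−p)/(m(m+1)) (so the λ_j are nonnegative and sum to 1). Then −Σ_{j=0}^{m} λ_j log₂ λ_j ≥ (1/(4 ln 2)) · ((m−2)/(2m(m+1)))². -/
open scoped BigOperators

theorem stmt14 (m : ℕ) (hm : 5 ≤ m) (p : ℝ) (hp : p ∈ Set.Icc (0 : ℝ) 1) :
    1 / (4 * Real.log 2) * (((m : ℝ) - 2) / (2 * (m : ℝ) * ((m : ℝ) + 1))) ^ 2 ≤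
      -∑ j ∈ Finset.range (m + 1),
        (2 * ((m : ℝ) - j + 1) * p / (((m : ℝ) + 1) * ((m : ℝ) + 2)) +
            2 * (j : ℝ) * (1 - p) / ((m : ℝ) * ((m : ℝ) + 1))) *
          Real.logb 2
            (2 * ((m : ℝ) - j + 1) * p / (((m : ℝ) + 1) * ((m : ℝ) + 2)) +
              2 * (j : ℝ) * (1 - p) / ((m : ℝ) * ((m : ℝ) + 1))) := by
  obtain ⟨hp0, hp1⟩ := hp
  have hm5 : (5 : ℝ) ≤ (m : ℝ) := by exact_mod_cast hm
  set mr : ℝ := (m : ℝ) with hmr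
  have hmpos : 0 < mr := by linarith
  have h1 : (0:ℝ) < mr + 1 := by linarith
  have h2 : (0:ℝ) < mr + 2 := by linarith
  set f : ℕ → ℝ := fun j =>
    2 * (mr - j + 1) * p / ((mr + 1) * (mr + 2)) + 2 * j * (1 - p) / (mr * (mr + 1)) with hf
  -- nonnegativity and upper bound
  have hjle : ∀ j ∈ Finset.range (m + 1), (j : ℝ) ≤ mr := by
    intro j hj
    have h : j ≤ m := Nat.lt_succ_iff.mp (Finset.mem_range.mp hj)
    simpa [hmr] using (Nat.cast_le (α := ℝ)).mpr h
  have hfnn : ∀ j ∈ Finset.range (m + 1), 0 ≤ f j := by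
    intro j hj
    have hj' := hjle j hj
    have hjn : (0:ℝ) ≤ (j:ℝ) := Nat.cast_nonneg j
    have t1 : 0 ≤ 2 * (mr - j + 1) * p / ((mr + 1) * (mr + 2)) := by
      apply div_nonneg _ (by positivity)
      have : (0:ℝ) ≤ mr - j + 1 := by linarith
      nlinarith
    have t2 : 0 ≤ 2 * j * (1 - p) / (mr * (mr + 1)) := by
      apply div_nonneg _ (by positivity)
      nlinarith
    simp only [hf]
    linarith
  have hfle : ∀ j ∈ Finset.range (m + 1), f j ≤ 2 / (mr + 1) := by
    intro j hj
    have hj' := hjle j hj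
    have hjn : (0:ℝ) ≤ (j:ℝ) := Nat.cast_nonneg j
    have t1 : 2 * (mr - j + 1) * p / ((mr + 1) * (mr + 2)) ≤ 2 * p / (mr + 2) := by
      rw [div_le_div_iff₀ (by positivity) (by positivity)]
      nlinarith [mul_nonneg (mul_nonneg hp0 hjn) h2.le]
    have t2 : 2 * j * (1 - p) / (mr * (mr + 1)) ≤ 2 * (1 - p) / (mr + 1) := by
      rw [div_le_div_iff₀ (by positivity) (by positivity)]
      nlinarith [mul_nonneg (mul_nonneg (by linarith : (0:ℝ) ≤ 1 - p) h1.le)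
        (by linarith : (0:ℝ) ≤ mr - j)]
    have t3 : 2 * p / (mr + 2) ≤ 2 * p / (mr + 1) := by
      apply div_le_div_of_nonneg_left (by linarith) h1 (by linarith)
      |>.trans_eq rfl
    have : f j ≤ 2 * p / (mr + 1) + 2 * (1 - p) / (mr + 1) := by
      simp only [hf]; linarith
    calc f j ≤ 2 * p / (mr + 1) + 2 * (1 - p) / (mr + 1) := this
      _ = 2 / (mr + 1) := by ring
  -- sum equals 1
  have hGauss : ∑ j ∈ Finset.range (m + 1), (j : ℝ) = mr * (mr + 1) / 2 := by
    have h : (∑ i ∈ Finset.range (m + 1), i) * 2 = (m + 1) * m := by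
      rw [Finset.sum_range_id_mul_two, Nat.add_sub_cancel]
    have h' := congrArg (Nat.cast : ℕ → ℝ) h
    push_cast at h'
    rw [hmr]
    linarith
  have hsum : ∑ j ∈ Finset.range (m + 1), f j = 1 := by
    have key : ∀ j : ℕ, f j =
        2 * p * (mr + 1) / ((mr + 1) * (mr + 2)) +
          (2 * (1 - p) / (mr * (mr + 1)) - 2 * p / ((mr + 1) * (mr + 2))) * (j : ℝ) := by
      intro j
      simp only [hf]
      field_simp
      ring
    rw [Finset.sum_congr rfl (fun j _ => key j)]
    rw [Finset.sum_add_distrib, Finset.sum_const, ← Finset.mul_sum, hGauss]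
    simp only [Finset.card_range, nsmul_eq_mul]
    push_cast
    field_simp
    ring
  -- entropy lower bound via max
  have hstep : ∑ j ∈ Finset.range (m + 1), f j * Real.logb 2 (f j) ≤
      ∑ j ∈ Finset.range (m + 1), f j * Real.logb 2 (2 / (mr + 1)) := by
    apply Finset.sum_le_sum
    intro j hj
    rcases eq_or_lt_of_le (hfnn j hj) with h0 | h0
    · rw [← h0]; simp
    · exact mul_le_mul_of_nonneg_left
        (Real.logb_le_logb_of_le (by norm_num) h0 (hfle j hj)) (le_of_lt h0)
  have hlogsum : ∑ j ∈ Finset.range (m + 1), f j * Real.logb 2 (2 / (mr + 1)) =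
      Real.logb 2 (2 / (mr + 1)) := by
    rw [← Finset.sum_mul, hsum, one_mul]
  -- so entropy ≥ logb 2 ((mr+1)/2)
  have hval : Real.logb 2 (2 / (mr + 1)) = -Real.logb 2 ((mr + 1) / 2) := by
    rw [← Real.logb_inv]
    congr 1
    rw [inv_div]
  have hent : Real.logb 2 ((mr + 1) / 2) ≤
      -∑ j ∈ Finset.range (m + 1), f j * Real.logb 2 (f j) := by
    have := hstep.trans_eq hlogsum
    rw [hval] at this
    linarith
  -- final numeric estimate
  have hlog2 : (0.6931471803 : ℝ) < Real.log 2 := Real.log_two_gt_d9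
  have hlogge : (1 : ℝ) ≤ Real.logb 2 ((mr + 1) / 2) := by
    have : Real.logb 2 2 ≤ Real.logb 2 ((mr + 1) / 2) :=
      Real.logb_le_logb_of_le (by norm_num) (by norm_num) (by linarith)
    rwa [Real.logb_self_eq_one (by norm_num)] at this
  have hx : ((mr - 2) / (2 * mr * (mr + 1))) ^ 2 ≤ 1 := by
    have hxx : 0 ≤ (mr - 2) / (2 * mr * (mr + 1)) := by
      apply div_nonneg (by linarith) (by positivity)
    have hxy : (mr - 2) / (2 * mr * (mr + 1)) ≤ 1 := by
      rw [div_le_one (by positivity)]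
      nlinarith
    nlinarith
  have hcoef : 1 / (4 * Real.log 2) ≤ 1 := by
    rw [div_le_one (by linarith)]
    linarith
  have hLHS : 1 / (4 * Real.log 2) * ((mr - 2) / (2 * mr * (mr + 1))) ^ 2 ≤ 1 := by
    have h4 : (0:ℝ) < 4 * Real.log 2 := by linarith
    have : 1 / (4 * Real.log 2) * ((mr - 2) / (2 * mr * (mr + 1))) ^ 2 ≤
        1 / (4 * Real.log 2) * 1 := by
      apply mul_le_mul_of_nonneg_left hx (by positivity)
    linarith
  calc 1 / (4 * Real.log 2) * ((mr - 2) / (2 * mr * (mr + 1))) ^ 2 ≤ 1 := hLHS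
    _ ≤ Real.logb 2 ((mr + 1) / 2) := hlogge
    _ ≤ -∑ j ∈ Finset.range (m + 1), f j * Real.logb 2 (f j) := hent
end

section
/- Let d₁, d₂ be positive integers and let ρ be a positive semidefinite complex matrix indexed by (Fin d₁ × Fin d₂). Define the partial traces Tr₁ρ (a d₂×d₂ matrix with entries (Tr₁ρ)_{j,j'} = Σ_{i} ρ_{(i,j),(i,j')}) and Tr₂ρ (a d₁×d₁ matrix with entries (Tr₂ρ)_{i,i'} = Σ_{j} ρ_{(i,j),(i',j)}). If ρ is separable, then rank ρ ≥ rank(Tr₁ρ) and rank ρ ≥ rank(Tr₂ρ); equivalently, if rank ρ < max(rank(Tr₁ρ), rank(Tr₂ρ)) then ρ is not separable. -/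
open scoped BigOperators Matrix ComplexOrder Kronecker
open Matrix

/-- A positive semidefinite matrix indexed by a product system is separable if it is a
finite sum of Kronecker products of positive semidefinite matrices of the two factors. -/
def Separable {d₁ d₂ : ℕ} (ρ : Matrix (Fin d₁ × Fin d₂) (Fin d₁ × Fin d₂) ℂ) : Prop :=
  ∃ (t : ℕ) (σ : Fin t → Matrix (Fin d₁) (Fin d₁) ℂ)
    (τ : Fin t → Matrix (Fin d₂) (Fin d₂) ℂ),
    (∀ s, (σ s).PosSemidef) ∧ (∀ s, (τ s).PosSemidef) ∧ ρ = ∑ s, σ s ⊗ₖ τ s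

/-- The partial trace over the first factor. -/
noncomputable def ptrace1 {d₁ d₂ : ℕ}
    (ρ : Matrix (Fin d₁ × Fin d₂) (Fin d₁ × Fin d₂) ℂ) : Matrix (Fin d₂) (Fin d₂) ℂ :=
  Matrix.of fun j j' => ∑ i, ρ (i, j) (i, j')

/-- The partial trace over the second factor. -/
noncomputable def ptrace2 {d₁ d₂ : ℕ}
    (ρ : Matrix (Fin d₁ × Fin d₂) (Fin d₁ × Fin d₂) ℂ) : Matrix (Fin d₁) (Fin d₁) ℂ :=
  Matrix.of fun i i' => ∑ j, ρ (i, j) (i', j)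

/- ### Auxiliary lemmas -/

lemma my_sum_if_const {ι : Type*} [Fintype ι] (c : Prop) [Decidable c] (f : ι → ℂ) :
    ∑ x, (if c then f x else 0) = if c then ∑ x, f x else 0 := by
  split <;> simp

lemma my_dotProduct_sum {ι n : Type*} [Fintype n] (s : Finset ι) (v : n → ℂ) (f : ι → n → ℂ) :
    v ⬝ᵥ (∑ i ∈ s, f i) = ∑ i ∈ s, v ⬝ᵥ f i := by
  simp only [dotProduct, Finset.sum_apply, Finset.mul_sum]
  exact Finset.sum_comm

lemma my_sum_mulVec {ι m n : Type*} [Fintype n] (s : Finset ι)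
    (M : ι → Matrix m n ℂ) (x : n → ℂ) :
    (∑ i ∈ s, M i) *ᵥ x = ∑ i ∈ s, M i *ᵥ x := by
  ext j
  simp only [mulVec, dotProduct, Matrix.sum_apply, Finset.sum_apply, Finset.sum_mul]
  exact Finset.sum_comm

/-- Kernel of a nonnegative combination of PSD matrices. -/
lemma psd_sum_smul_mulVec_eq_zero_iff {d t : ℕ}
    (σ : Fin t → Matrix (Fin d) (Fin d) ℂ) (hσ : ∀ s, (σ s).PosSemidef)
    (c : Fin t → ℂ) (hc : ∀ s, 0 ≤ c s) (x : Fin d → ℂ) :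
    (∑ s, c s • σ s) *ᵥ x = 0 ↔ ∀ s, c s ≠ 0 → σ s *ᵥ x = 0 := by
  constructor
  · intro h s hs
    have hsum : ∑ s, c s * (star x ⬝ᵥ σ s *ᵥ x) = 0 := by
      have h0 : star x ⬝ᵥ (∑ s, c s • σ s) *ᵥ x = 0 := by rw [h, dotProduct_zero]
      rw [my_sum_mulVec, my_dotProduct_sum] at h0
      simpa only [smul_mulVec, dotProduct_smul, smul_eq_mul] using h0
    have hterm : ∀ s ∈ Finset.univ, (0 : ℂ) ≤ c s * (star x ⬝ᵥ σ s *ᵥ x) := fun s _ =>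
      mul_nonneg (hc s) ((hσ s).dotProduct_mulVec_nonneg x)
    have hz := (Finset.sum_eq_zero_iff_of_nonneg hterm).mp hsum s (Finset.mem_univ s)
    rcases mul_eq_zero.mp hz with h' | h'
    · exact absurd h' hs
    · exact ((hσ s).dotProduct_mulVec_zero_iff x).mp h'
  · intro h
    rw [my_sum_mulVec]
    refine Finset.sum_eq_zero fun s _ => ?_
    rcases eq_or_ne (c s) 0 with h0 | h0
    · simp [h0]
    · simp [smul_mulVec, h s h0]

lemma rank_eq_of_ker_eq {d : ℕ} (M N : Matrix (Fin d) (Fin d) ℂ)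
    (h : LinearMap.ker M.mulVecLin = LinearMap.ker N.mulVecLin) : M.rank = N.rank := by
  have hM := LinearMap.finrank_range_add_finrank_ker M.mulVecLin
  have hN := LinearMap.finrank_range_add_finrank_ker N.mulVecLin
  rw [h] at hM
  rw [Matrix.rank, Matrix.rank]
  omega

lemma rank_sum_smul_congr {d t : ℕ}
    (σ : Fin t → Matrix (Fin d) (Fin d) ℂ) (hσ : ∀ s, (σ s).PosSemidef)
    (c b : Fin t → ℂ) (hc : ∀ s, 0 ≤ c s) (hb : ∀ s, 0 ≤ b s)
    (hcb : ∀ s, c s = 0 ↔ b s = 0) :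
    (∑ s, c s • σ s).rank = (∑ s, b s • σ s).rank := by
  apply rank_eq_of_ker_eq
  ext x
  simp only [LinearMap.mem_ker, mulVecLin_apply]
  rw [psd_sum_smul_mulVec_eq_zero_iff σ hσ c hc, psd_sum_smul_mulVec_eq_zero_iff σ hσ b hb]
  constructor
  · intro h s hs
    exact h s fun h0 => hs ((hcb s).mp h0)
  · intro h s hs
    exact h s fun h0 => hs ((hcb s).mpr h0)

/-- A vector avoiding the kernels of finitely many nonzero matrices. -/
lemma exists_avoiding_vector {t n : ℕ} (τ : Fin t → Matrix (Fin n) (Fin n) ℂ) :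
    ∃ w : Fin n → ℂ, ∀ s, τ s ≠ 0 → τ s *ᵥ w ≠ 0 := by
  rcases Nat.eq_zero_or_pos n with hn | hn
  · refine ⟨0, fun s hs => absurd ?_ hs⟩
    subst hn
    ext i j
    exact absurd i.2 (by omega)
  · by_contra hcon
    push_neg at hcon
    set p : Fin t → Subspace ℂ (Fin n → ℂ) := fun s =>
      if τ s = 0 then ⊥ else LinearMap.ker (τ s).mulVecLin with hp
    have hcover : ⋃ s, (p s : Set (Fin n → ℂ)) = Set.univ := by
      ext w
      simp only [Set.mem_iUnion, Set.mem_univ, iff_true]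
      obtain ⟨s, hs1, hs2⟩ := hcon w
      refine ⟨s, ?_⟩
      simp [hp, hs1, hs2]
    obtain ⟨i, hi⟩ := Subspace.exists_eq_top_of_iUnion_eq_univ hcover
    rcases eq_or_ne (τ i) 0 with h0 | h0
    · rw [hp] at hi
      simp only [h0, if_pos] at hi
      have : Nontrivial (Fin n → ℂ) := by
        have : Nonempty (Fin n) := ⟨⟨0, hn⟩⟩
        infer_instance
      exact bot_ne_top hi
    · rw [hp] at hi
      simp only [h0, if_neg, if_false] at hi
      obtain ⟨a, b, hab⟩ : ∃ a b, τ i a b ≠ 0 := by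
        by_contra hh
        push_neg at hh
        exact h0 (by ext a b; exact hh a b)
      have hmem : Pi.single b 1 ∈ LinearMap.ker (τ i).mulVecLin := hi ▸ Submodule.mem_top
      rw [LinearMap.mem_ker, mulVecLin_apply, mulVec_single] at hmem
      have := congrFun hmem a
      simp only [Pi.smul_apply, op_smul_eq_mul, col_apply, mul_one, Pi.zero_apply] at this
      exact hab this

lemma psd_diag_nonneg {n : ℕ} {M : Matrix (Fin n) (Fin n) ℂ} (hM : M.PosSemidef)
    (j : Fin n) : 0 ≤ M j j := by
  have := hM.dotProduct_mulVec_nonneg (Pi.single j 1)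
  simpa [mulVec_single, dotProduct, Pi.single_apply, Finset.sum_ite_eq] using this

lemma psd_trace_eq_zero_iff {n : ℕ} {M : Matrix (Fin n) (Fin n) ℂ} (hM : M.PosSemidef) :
    M.trace = 0 ↔ M = 0 := by
  constructor
  · intro h
    have hdiag : ∀ j, M j j = 0 := by
      intro j
      have := (Finset.sum_eq_zero_iff_of_nonneg
        (fun j _ => psd_diag_nonneg hM j)).mp h j (Finset.mem_univ j)
      simpa [Matrix.diag] using this
    have hcol : ∀ j, M *ᵥ Pi.single j 1 = 0 := by
      intro j
      apply (hM.dotProduct_mulVec_zero_iff _).mp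
      have heq : star (Pi.single j 1 : Fin n → ℂ) ⬝ᵥ M *ᵥ Pi.single j 1 = M j j := by
        simp [mulVec_single, dotProduct, Pi.single_apply, Finset.sum_ite_eq]
      rw [heq, hdiag]
    ext a b
    have := congrFun (hcol b) a
    simpa using this
  · intro h; simp [h]

/-- The key compression identity. -/
lemma compress_eq {d₁ d₂ : ℕ} (σ : Matrix (Fin d₁) (Fin d₁) ℂ)
    (τ : Matrix (Fin d₂) (Fin d₂) ℂ) (w : Fin d₂ → ℂ) :
    (Matrix.of fun (i : Fin d₁) (p : Fin d₁ × Fin d₂) =>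
      if p.1 = i then star (w p.2) else 0) * (σ ⊗ₖ τ) *
    (Matrix.of fun (i : Fin d₁) (p : Fin d₁ × Fin d₂) =>
      if p.1 = i then star (w p.2) else 0)ᴴ = (star w ⬝ᵥ τ *ᵥ w) • σ := by
  ext i i'
  simp only [Matrix.mul_apply, Matrix.conjTranspose_apply, Matrix.of_apply,
    Matrix.kroneckerMap_apply, Matrix.smul_apply, smul_eq_mul,
    dotProduct, mulVec, Fintype.sum_prod_type]
  simp only [ite_mul, zero_mul, mul_ite, mul_zero, apply_ite star, star_zero, star_star]
  simp only [my_sum_if_const, Finset.sum_ite_eq', Finset.mem_univ, if_true]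
  simp only [Finset.sum_mul]
  rw [Finset.sum_comm]
  refine Finset.sum_congr rfl fun j _ => ?_
  rw [Finset.mul_sum, Finset.sum_mul]
  refine Finset.sum_congr rfl fun j' _ => ?_
  simp only [Pi.star_apply]
  ring

/-- The core rank inequality for a sum of Kronecker products of PSD matrices. -/
lemma key_rank_le {m n t : ℕ} (σ : Fin t → Matrix (Fin m) (Fin m) ℂ)
    (τ : Fin t → Matrix (Fin n) (Fin n) ℂ)
    (hσ : ∀ s, (σ s).PosSemidef) (hτ : ∀ s, (τ s).PosSemidef) :
    (∑ s, (τ s).trace • σ s).rank ≤ (∑ s, σ s ⊗ₖ τ s).rank := by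
  obtain ⟨w, hw⟩ := exists_avoiding_vector τ
  set A : Matrix (Fin m) (Fin m × Fin n) ℂ :=
    Matrix.of fun i p => if p.1 = i then star (w p.2) else 0 with hA
  have hAA : A * (∑ s, σ s ⊗ₖ τ s) * Aᴴ = ∑ s, (star w ⬝ᵥ τ s *ᵥ w) • σ s := by
    rw [Matrix.mul_sum, Matrix.sum_mul]
    exact Finset.sum_congr rfl fun s _ => compress_eq (σ s) (τ s) w
  have h1 : (∑ s, (τ s).trace • σ s).rank = (∑ s, (star w ⬝ᵥ τ s *ᵥ w) • σ s).rank := by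
    refine rank_sum_smul_congr σ hσ _ _ (fun s => ?_) (fun s => (hτ s).dotProduct_mulVec_nonneg w) (fun s => ?_)
    · rw [Matrix.trace]
      exact Finset.sum_nonneg fun j _ => psd_diag_nonneg (hτ s) j
    · constructor
      · intro h
        have : τ s = 0 := (psd_trace_eq_zero_iff (hτ s)).mp h
        simp [this]
      · intro h
        have hz : τ s *ᵥ w = 0 := ((hτ s).dotProduct_mulVec_zero_iff w).mp h
        have : τ s = 0 := by
          by_contra hne
          exact hw s hne hz
        rw [this]
        simp
  rw [h1, ← hAA]
  exact le_trans (Matrix.rank_mul_le_left _ _) (Matrix.rank_mul_le_right _ _)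

lemma ptrace2_sum_kron {d₁ d₂ t : ℕ} (σ : Fin t → Matrix (Fin d₁) (Fin d₁) ℂ)
    (τ : Fin t → Matrix (Fin d₂) (Fin d₂) ℂ) :
    ptrace2 (∑ s, σ s ⊗ₖ τ s) = ∑ s, (τ s).trace • σ s := by
  ext i i'
  simp only [ptrace2, Matrix.of_apply, Matrix.sum_apply, Matrix.kroneckerMap_apply,
    Matrix.smul_apply, smul_eq_mul, Matrix.trace, Matrix.diag, Finset.sum_mul]
  rw [Finset.sum_comm]
  exact Finset.sum_congr rfl fun s _ => Finset.sum_congr rfl fun j _ => mul_comm _ _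

lemma ptrace1_sum_kron {d₁ d₂ t : ℕ} (σ : Fin t → Matrix (Fin d₁) (Fin d₁) ℂ)
    (τ : Fin t → Matrix (Fin d₂) (Fin d₂) ℂ) :
    ptrace1 (∑ s, σ s ⊗ₖ τ s) = ∑ s, (σ s).trace • τ s := by
  ext j j'
  simp only [ptrace1, Matrix.of_apply, Matrix.sum_apply, Matrix.kroneckerMap_apply,
    Matrix.smul_apply, smul_eq_mul, Matrix.trace, Matrix.diag, Finset.sum_mul]
  rw [Finset.sum_comm]

theorem stmt16 (d₁ d₂ : ℕ) (h₁ : 0 < d₁) (h₂ : 0 < d₂)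
    (ρ : Matrix (Fin d₁ × Fin d₂) (Fin d₁ × Fin d₂) ℂ) (hρ : ρ.PosSemidef)
    (hsep : Separable ρ) :
    (ptrace1 ρ).rank ≤ ρ.rank ∧ (ptrace2 ρ).rank ≤ ρ.rank := by
  obtain ⟨t, σ, τ, hσ, hτ, hρeq⟩ := hsep
  constructor
  · -- ptrace1
    have h1 : ptrace1 ρ = ∑ s, (σ s).trace • τ s := by rw [hρeq]; exact ptrace1_sum_kron σ τ
    have h2 : (∑ s, (σ s).trace • τ s).rank ≤ (∑ s, τ s ⊗ₖ σ s).rank :=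
      key_rank_le τ σ hτ hσ
    have h3 : (∑ s, τ s ⊗ₖ σ s).rank = ρ.rank := by
      have hsub : ρ = (∑ s, τ s ⊗ₖ σ s).submatrix
          (Equiv.prodComm (Fin d₁) (Fin d₂)) (Equiv.prodComm (Fin d₁) (Fin d₂)) := by
        rw [hρeq]
        ext p q
        simp only [Matrix.submatrix_apply, Matrix.sum_apply, Matrix.kroneckerMap_apply,
          Equiv.prodComm_apply, Prod.swap]
        exact Finset.sum_congr rfl fun s _ => mul_comm _ _
      rw [hsub, Matrix.rank_submatrix]
    rw [h1, ← h3]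
    exact h2
  · -- ptrace2
    have h1 : ptrace2 ρ = ∑ s, (τ s).trace • σ s := by rw [hρeq]; exact ptrace2_sum_kron σ τ
    rw [h1, hρeq]
    exact key_rank_le σ τ hσ hτ
end

section
/- Let d, e, k be positive integers with d ≥ e and k < d, let T_1, …, T_k be complex e×d matrices with Σ_{j=1}^{k} T_j* T_j = I_d, and let Φ(A) = Σ_{j=1}^{k} T_j A T_j* be the corresponding quantum channel. Then the Choi matrix C(Φ) = Σ_{i,j=0}^{d−1} Φ(E_{ij}) ⊗ E_{ij} is not separable; i.e. a quantum channel from d×d to e×e matrices with d ≥ e that can be written with fewer than d Kraus operators is not entanglement breaking. -/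
open scoped BigOperators Matrix ComplexOrder Kronecker
open Matrix

/-- The Choi matrix `C(Φ) = ∑_{i,j} Φ(E_{ij}) ⊗ E_{ij}` of a linear map between
matrix spaces, where `E_{ij}` are the standard matrix units. -/
noncomputable def choi {d e : ℕ}
    (Φ : Matrix (Fin d) (Fin d) ℂ → Matrix (Fin e) (Fin e) ℂ) :
    Matrix (Fin e × Fin d) (Fin e × Fin d) ℂ :=
  ∑ i : Fin d, ∑ j : Fin d, Φ (Matrix.single i j 1) ⊗ₖ Matrix.single i j 1

open scoped MatrixOrder in
/-- Square root of a PSD matrix. -/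
noncomputable def Matrix.PosSemidef.sqrt {n : ℕ} {A : Matrix (Fin n) (Fin n) ℂ}
    (_hA : A.PosSemidef) : Matrix (Fin n) (Fin n) ℂ := CFC.sqrt A

open scoped MatrixOrder in
lemma Matrix.PosSemidef.sqrt_mul_self {n : ℕ} {A : Matrix (Fin n) (Fin n) ℂ}
    (hA : A.PosSemidef) : hA.sqrt * hA.sqrt = A :=
  CFC.sqrt_mul_sqrt_self A (Matrix.nonneg_iff_posSemidef.mpr hA)

open scoped MatrixOrder in
lemma Matrix.PosSemidef.posSemidef_sqrt {n : ℕ} {A : Matrix (Fin n) (Fin n) ℂ}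
    (hA : A.PosSemidef) : hA.sqrt.PosSemidef :=
  Matrix.nonneg_iff_posSemidef.mp (CFC.sqrt_nonneg A)

/-- Rank-one decomposition of a PSD matrix via its square root. -/
lemma psd_entry_decomp {n : ℕ} {A : Matrix (Fin n) (Fin n) ℂ} (hA : A.PosSemidef)
    (a b : Fin n) : A a b = ∑ m, hA.sqrt a m * star (hA.sqrt b m) := by
  conv_lhs => rw [← hA.sqrt_mul_self]
  rw [Matrix.mul_apply]
  refine Finset.sum_congr rfl fun m _ => ?_
  rw [← hA.posSemidef_sqrt.1.apply b m, star_star]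

/-- Key sesquilinear expansion. -/
lemma aux_sum {ι : Type*} [Fintype ι] {n : Type*} [Fintype n] [DecidableEq n]
    (f : ι → EuclideanSpace ℂ n) (z : EuclideanSpace ℂ n) :
    ∑ s, star (inner ℂ (f s) z) * inner ℂ (f s) z
      = ∑ m, ∑ m', star (z m) * z m' * (∑ s, f s m * star (f s m')) := by
  have h : ∀ s, star (inner ℂ (f s) z) * inner ℂ (f s) z
      = ∑ m, ∑ m', star (z m) * z m' * (f s m * star (f s m')) := by
    intro s
    simp only [PiLp.inner_apply, RCLike.inner_apply, star_sum, star_mul', star_star,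
      starRingEnd_apply]
    rw [Finset.sum_mul_sum]
    exact Finset.sum_congr rfl fun m _ => Finset.sum_congr rfl fun m' _ => by ring
  rw [Finset.sum_congr rfl fun s _ => h s, Finset.sum_comm]
  refine Finset.sum_congr rfl fun m _ => ?_
  rw [Finset.sum_comm]
  exact Finset.sum_congr rfl fun m' _ => by rw [← Finset.mul_sum]

theorem stmt17 (d e k : ℕ) (hd : 0 < d) (he : 0 < e) (hk : 0 < k)
    (hed : e ≤ d) (hkd : k < d)
    (T : Fin k → Matrix (Fin e) (Fin d) ℂ)
    (hT : ∑ j, (T j)ᴴ * T j = 1)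
    (Φ : Matrix (Fin d) (Fin d) ℂ → Matrix (Fin e) (Fin e) ℂ)
    (hΦ : ∀ A, Φ A = ∑ j, T j * A * (T j)ᴴ) :
    ¬ Separable (choi Φ) := by
  classical
  rintro ⟨t, σ, τ, hσ, hτ, hsep⟩
  -- the Kraus-side entries of the Choi matrix
  have hC : ∀ (a b : Fin e) (i j : Fin d),
      choi Φ (a, i) (b, j) = ∑ s, T s a i * star (T s b j) := by
    intro a b i j
    simp only [choi, Finset.sum_apply, Matrix.sum_apply, kroneckerMap_apply, hΦ,
      Matrix.mul_apply, Matrix.single, conjTranspose_apply, Matrix.of_apply]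
    simp only [mul_ite, mul_one, mul_zero, ite_mul, zero_mul, ite_and,
      Finset.sum_ite_eq', Finset.sum_ite_eq, Finset.mem_univ, if_true]
    simp
  -- rank-one vectors from the separable decomposition
  let P := Fin t × Fin e × Fin d
  let x : P → Fin e → ℂ := fun p a => (hσ p.1).sqrt a p.2.1
  let y : P → Fin d → ℂ := fun p i => (hτ p.1).sqrt i p.2.2
  let w : P → EuclideanSpace ℂ (Fin e × Fin d) := fun p => WithLp.toLp 2 (fun u => x p u.1 * y p u.2)
  let v : Fin k → EuclideanSpace ℂ (Fin e × Fin d) := fun s => WithLp.toLp 2 (fun u => T s u.1 u.2)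
  -- the central entrywise identity
  have hE : ∀ u u' : Fin e × Fin d,
      (∑ s, v s u * star (v s u')) = ∑ p : P, w p u * star (w p u') := by
    intro u u'
    have h1 : (∑ s, v s u * star (v s u')) = choi Φ (u.1, u.2) (u'.1, u'.2) :=
      (hC u.1 u'.1 u.2 u'.2).symm
    rw [h1]
    have h2 : choi Φ (u.1, u.2) (u'.1, u'.2) = ∑ s, σ s u.1 u'.1 * τ s u.2 u'.2 := by
      rw [hsep]; simp [Matrix.sum_apply]
    rw [h2, Fintype.sum_prod_type]
    refine Finset.sum_congr rfl fun s _ => ?_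
    rw [psd_entry_decomp (hσ s), psd_entry_decomp (hτ s), Finset.sum_mul_sum,
      Fintype.sum_prod_type]
    refine Finset.sum_congr rfl fun n _ => Finset.sum_congr rfl fun m _ => ?_
    show _ = (x (s, n, m) u.1 * y (s, n, m) u.2) * star (x (s, n, m) u'.1 * y (s, n, m) u'.2)
    simp only [star_mul', x, y]
    ring
  -- partial trace identity
  have hPT : ∀ i j : Fin d,
      (∑ p : P, (∑ a, x p a * star (x p a)) * (y p i * star (y p j)))
        = if i = j then 1 else 0 := by
    intro i j
    have h2 : (∑ s : Fin k, ∑ a : Fin e, T s a i * star (T s a j))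
        = if i = j then 1 else 0 := by
      have h : (∑ s, (T s)ᴴ * T s) j i = (1 : Matrix (Fin d) (Fin d) ℂ) j i := by rw [hT]
      simp only [Matrix.sum_apply, Matrix.mul_apply, conjTranspose_apply,
        Matrix.one_apply] at h
      rw [show ((if i = j then 1 else 0) : ℂ) = if j = i then 1 else 0 by
        by_cases hij : i = j <;> simp [hij, Ne.symm, eq_comm], ← h]
      exact Finset.sum_congr rfl fun s _ => Finset.sum_congr rfl fun a _ => mul_comm _ _
    calc (∑ p : P, (∑ a, x p a * star (x p a)) * (y p i * star (y p j)))
        = ∑ p : P, ∑ a, w p (a, i) * star (w p (a, j)) := by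
          refine Finset.sum_congr rfl fun p _ => ?_
          rw [Finset.sum_mul]
          refine Finset.sum_congr rfl fun a _ => ?_
          show _ = (x p a * y p i) * star (x p a * y p j)
          simp only [star_mul']
          ring
      _ = ∑ a, ∑ p : P, w p (a, i) * star (w p (a, j)) := Finset.sum_comm
      _ = ∑ a, ∑ s, v s (a, i) * star (v s (a, j)) := by
          exact Finset.sum_congr rfl fun a _ => (hE (a, i) (a, j)).symm
      _ = ∑ s, ∑ a, v s (a, i) * star (v s (a, j)) := Finset.sum_comm
      _ = if i = j then 1 else 0 := h2
  -- the y's with nonzero partner span everything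
  let S : Set (Fin d → ℂ) := {u | ∃ p : P, x p ≠ 0 ∧ y p = u}
  have hspan : Submodule.span ℂ S = ⊤ := by
    rw [eq_top_iff]
    intro z _
    have hz : z = ∑ p : P,
        ((∑ a, x p a * star (x p a)) * (∑ i, star (y p i) * z i)) • y p := by
      funext jj
      rw [Finset.sum_apply]
      have : ∀ p : P, (((∑ a, x p a * star (x p a)) * (∑ i, star (y p i) * z i)) • y p) jj
          = ∑ i, ((∑ a, x p a * star (x p a)) * (y p jj * star (y p i))) * z i := by
        intro p
        simp only [Pi.smul_apply, smul_eq_mul, Finset.mul_sum, Finset.sum_mul]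
        exact Finset.sum_congr rfl fun i _ => Finset.sum_congr rfl fun a _ => by ring
      rw [Finset.sum_congr rfl fun p _ => this p, Finset.sum_comm]
      have : ∀ i, (∑ p : P, ((∑ a, x p a * star (x p a)) * (y p jj * star (y p i))) * z i)
          = (if jj = i then 1 else 0) * z i := by
        intro i
        rw [← Finset.sum_mul, hPT jj i]
      rw [Finset.sum_congr rfl fun i _ => this i]
      simp [ite_mul]
    rw [hz]
    refine Submodule.sum_mem _ fun p _ => ?_
    by_cases hxp : x p = 0
    · have h0 : (∑ a, x p a * star (x p a)) = 0 := by simp [hxp]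
      rw [h0, zero_mul, zero_smul]
      exact Submodule.zero_mem _
    · exact Submodule.smul_mem _ _ (Submodule.subset_span ⟨p, hxp, rfl⟩)
  -- the span of the Kraus vectors
  set V : Submodule ℂ (EuclideanSpace ℂ (Fin e × Fin d)) :=
    Submodule.span ℂ (Set.range v) with hV
  -- every w p lies in V
  have hw : ∀ p : P, w p ∈ V := by
    intro p
    rw [← Submodule.orthogonal_orthogonal V]
    rw [Submodule.mem_orthogonal]
    intro z hz
    have hzv : ∀ s, inner ℂ (v s) z = 0 := fun s =>
      (Submodule.mem_orthogonal V z).mp hz _ (Submodule.subset_span ⟨s, rfl⟩)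
    have hkey : (∑ p : P, star (inner ℂ (w p) z) * inner ℂ (w p) z) = 0 := by
      rw [aux_sum]
      have h0 : (∑ s, star (inner ℂ (v s) z) * inner ℂ (v s) z) = 0 := by
        simp [hzv]
      rw [← h0, aux_sum]
      refine Finset.sum_congr rfl fun m _ => Finset.sum_congr rfl fun m' _ => ?_
      rw [hE m m']
    have hterm : ∀ p : P, inner ℂ (w p) z = 0 := by
      have h1 : (∑ p : P, (Complex.normSq (inner ℂ (w p) z) : ℂ)) = 0 := by
        rw [← hkey]
        exact Finset.sum_congr rfl fun p _ => (Complex.normSq_eq_conj_mul_self).symm ▸ rfl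
      have h2 : (∑ p : P, Complex.normSq (inner ℂ (w p) z)) = 0 := by
        have := h1
        push_cast at this
        exact_mod_cast this
      intro p
      have := (Finset.sum_eq_zero_iff_of_nonneg
        (fun q _ => Complex.normSq_nonneg _)).mp h2 p (Finset.mem_univ p)
      exact Complex.normSq_eq_zero.mp this
    have : inner ℂ z (w p) = star (inner ℂ (w p) z) := by
      rw [← inner_conj_symm]; rfl
    rw [this, hterm p, star_zero]
  -- extract a basis from S
  obtain ⟨b, hbS, hbspan, hbli⟩ := exists_linearIndependent ℂ S
  rw [hspan] at hbspan
  let B : Module.Basis b ℂ (Fin d → ℂ) := Module.Basis.mk hbli (by rw [Subtype.range_coe, hbspan])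
  have hcard : Cardinal.mk b = d := by
    have h := B.mk_eq_rank''
    rw [rank_fun'] at h
    simpa using h
  have hequiv : Nonempty (Fin d ≃ b) := by
    rw [← Cardinal.mk_fin d] at hcard
    exact (Cardinal.eq.mp hcard.symm)
  obtain ⟨g⟩ := hequiv
  have hgS : ∀ i : Fin d, ∃ p : P, x p ≠ 0 ∧ y p = (g i : Fin d → ℂ) :=
    fun i => hbS (g i).2
  choose pf hx hy using hgS
  -- linear independence of the corresponding y's
  have hyli : LinearIndependent ℂ fun i : Fin d => y (pf i) := by
    have hcomp : (fun i : Fin d => y (pf i)) = (fun c : b => (c : Fin d → ℂ)) ∘ g := by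
      funext i; exact hy i
    rw [hcomp]
    exact hbli.comp g g.injective
  -- linear independence of the corresponding w's
  have hwli : LinearIndependent ℂ fun i : Fin d => w (pf i) := by
    rw [Fintype.linearIndependent_iff]
    intro c hc i0
    obtain ⟨a0, ha0⟩ : ∃ a, x (pf i0) a ≠ 0 := by
      by_contra h; push_neg at h; exact hx i0 (funext h)
    have hvec : (∑ i, (c i * x (pf i) a0) • y (pf i)) = (0 : Fin d → ℂ) := by
      funext jj
      have hcd := congrArg (EuclideanSpace.projₗ (𝕜 := ℂ) (a0, jj)) hc
      rw [map_sum, map_zero] at hcd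
      simp only [_root_.map_smul, smul_eq_mul] at hcd
      have hproj : ∀ i : Fin d, (EuclideanSpace.projₗ (𝕜 := ℂ) (a0, jj)) (w (pf i))
          = x (pf i) a0 * y (pf i) jj := fun i => rfl
      simp only [hproj] at hcd
      simp only [Finset.sum_apply, Pi.smul_apply, smul_eq_mul, Pi.zero_apply]
      rw [← hcd]
      exact Finset.sum_congr rfl fun i _ => by ring
    have := Fintype.linearIndependent_iff.mp hyli (fun i => c i * x (pf i) a0) hvec i0
    exact (mul_eq_zero.mp this).resolve_right ha0
  -- conclude
  have h1 : d ≤ Module.finrank ℂ V := by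
    have hli : LinearIndependent ℂ fun i : Fin d => (⟨w (pf i), hw _⟩ : V) := by
      apply LinearIndependent.of_comp V.subtype
      exact hwli
    simpa using hli.fintype_card_le_finrank
  have h2 : Module.finrank ℂ V ≤ k := by
    have h := finrank_span_le_card (R := ℂ) (Set.range v)
    rw [Set.toFinset_range] at h
    exact le_trans h (le_trans (Finset.card_image_le) (by simp))
  omega
end
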